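/- For a subnormalized state ρ and an operator Π with 0 ≤ Π ≤ I on a finite-dimensional Hilbert space, the purified distance satisfies P(ρ, ΠρΠ) ≤ (1/√(tr ρ)) · √((tr ρ)² − (tr(Π² ρ))²). -/

import Mathlib

open scoped ComplexOrder Kronecker
open Matrix Classical

noncomputable def msqrt {n : Type*} [Fintype n] [DecidableEq n] (A : Matrix n n ℂ) :
    Matrix n n ℂ :=
  if h : A.PosSemidef then
    h.1.eigenvectorUnitary.1 * diagonal ((↑) ∘ (√·) ∘ h.1.eigenvalues) *
      (star h.1.eigenvectorUnitary : Matrix n n ℂ)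
  else 0

noncomputable def traceNorm {n : Type*} [Fintype n] [DecidableEq n] (A : Matrix n n ℂ) : ℝ :=
  (msqrt (Aᴴ * A)).trace.re

noncomputable def fid {n : Type*} [Fintype n] [DecidableEq n] (ρ σ : Matrix n n ℂ) : ℝ :=
  traceNorm (msqrt ρ * msqrt σ) + Real.sqrt ((1 - ρ.trace.re) * (1 - σ.trace.re))

noncomputable def pdist {n : Type*} [Fintype n] [DecidableEq n] (ρ σ : Matrix n n ℂ) : ℝ :=
  Real.sqrt (1 - (fid ρ σ) ^ 2)

/-- Loewner order: `A ≤ B` iff `B - A` is positive semidefinite. -/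
def loewnerLE {n : Type*} [Fintype n] (A B : Matrix n n ℂ) : Prop := (B - A).PosSemidef

/-- Max-relative entropy `D_max(ρ‖σ) = min {λ : ρ ≤ 2^λ σ}`. -/
noncomputable def Dmax {n : Type*} [Fintype n] (ρ σ : Matrix n n ℂ) : ℝ :=
  sInf {l : ℝ | loewnerLE ρ (((2 : ℝ) ^ l) • σ)}

def Subnormalized {n : Type*} [Fintype n] (ρ : Matrix n n ℂ) : Prop :=
  ρ.PosSemidef ∧ 0 < ρ.trace.re ∧ ρ.trace.re ≤ 1

def IsDensity {n : Type*} [Fintype n] (ρ : Matrix n n ℂ) : Prop :=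
  ρ.PosSemidef ∧ ρ.trace = 1

/-! ### Auxiliary lemmas -/

noncomputable abbrev Matrix.PosSemidef.sqrt {n : Type*} [Fintype n] [DecidableEq n] {A : Matrix n n ℂ}
    (h : A.PosSemidef) : Matrix n n ℂ :=
  h.1.eigenvectorUnitary.1 * diagonal ((↑) ∘ (√·) ∘ h.1.eigenvalues) *
    (star h.1.eigenvectorUnitary : Matrix n n ℂ)

section SqrtPort
open scoped MatrixOrder

lemma Matrix.PosSemidef.sqrt_eq_cfc {n : Type*} [Fintype n] [DecidableEq n] {A : Matrix n n ℂ}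
    (h : A.PosSemidef) : h.sqrt = CFC.sqrt A := by
  rw [CFC.sqrt_eq_cfc, cfc_nnreal_eq_real _ A, h.1.cfc_eq]
  simp only [Matrix.IsHermitian.cfc, Unitary.conjStarAlgAut_apply, Matrix.PosSemidef.sqrt]
  congr 3
  funext i
  simp [Real.coe_sqrt, Real.coe_toNNReal', max_eq_left (h.eigenvalues_nonneg i)]

lemma Matrix.PosSemidef.sqrt_mul_self {n : Type*} [Fintype n] [DecidableEq n]
    {A : Matrix n n ℂ} (h : A.PosSemidef) : h.sqrt * h.sqrt = A := by
  rw [h.sqrt_eq_cfc]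
  exact CFC.sqrt_mul_sqrt_self A h.nonneg

lemma Matrix.PosSemidef.posSemidef_sqrt {n : Type*} [Fintype n] [DecidableEq n]
    {A : Matrix n n ℂ} (h : A.PosSemidef) : h.sqrt.PosSemidef := by
  rw [h.sqrt_eq_cfc]
  exact (CFC.sqrt_nonneg A).posSemidef

lemma Matrix.PosSemidef.eq_sqrt_of_sq_eq {n : Type*} [Fintype n] [DecidableEq n]
    {A B : Matrix n n ℂ} (hA : A.PosSemidef) (hB : B.PosSemidef) (hAB : A ^ 2 = B) :
    A = hB.sqrt := by
  rw [hB.sqrt_eq_cfc, eq_comm, CFC.sqrt_eq_iff B A hB.nonneg hA.nonneg, ← sq, hAB]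

end SqrtPort

open Polynomial in
lemma my_charpoly_eval {n : Type*} [Fintype n] [DecidableEq n] {K : Type*} [CommRing K]
    (M : Matrix n n K) (z : K) :
    M.charpoly.eval z = (z • (1 : Matrix n n K) - M).det := by
  rw [Matrix.charpoly, ← Polynomial.coe_evalRingHom, RingHom.map_det]
  congr 1
  ext i j
  simp [Matrix.charmatrix_apply, Matrix.diagonal_apply, Matrix.one_apply, Matrix.sub_apply,
    Matrix.smul_apply, apply_ite (Polynomial.eval z), mul_comm]

lemma my_charpoly_mul_comm {n : Type*} [Fintype n] [DecidableEq n] (A B : Matrix n n ℂ) :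
    (A * B).charpoly = (B * A).charpoly := by
  apply Polynomial.funext
  intro z
  rw [my_charpoly_eval, my_charpoly_eval]
  rcases eq_or_ne z 0 with rfl | hz
  · simp only [zero_smul, zero_sub, Matrix.det_neg, Matrix.det_mul]
    ring
  · have h1 : z • (1 : Matrix n n ℂ) - A * B = z • (1 - A * (z⁻¹ • B)) := by
      rw [smul_sub, Matrix.mul_smul, smul_smul, mul_inv_cancel₀ hz, one_smul]
    have h2 : z • (1 : Matrix n n ℂ) - B * A = z • (1 - (z⁻¹ • B) * A) := by
      rw [smul_sub, Matrix.smul_mul, smul_smul, mul_inv_cancel₀ hz, one_smul]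
    rw [h1, h2, Matrix.det_smul, Matrix.det_smul, Matrix.det_one_sub_mul_comm]

open Polynomial in
lemma my_charpoly_diagonal_roots {n : Type*} [Fintype n] [DecidableEq n] (d : n → ℂ) :
    (Matrix.diagonal d).charpoly.roots = Finset.univ.val.map d := by
  have h : (Matrix.diagonal d).charpoly
      = ((Finset.univ.val.map d).map (fun a => X - C a)).prod := by
    apply Polynomial.funext
    intro z
    rw [my_charpoly_eval]
    have h2 : z • (1 : Matrix n n ℂ) - Matrix.diagonal d
        = Matrix.diagonal (fun i => z - d i) := by
      rw [Matrix.smul_one_eq_diagonal, Matrix.diagonal_sub]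
    rw [h2, Matrix.det_diagonal, Polynomial.eval_multiset_prod,
      Finset.prod_eq_multiset_prod]
    simp [Multiset.map_map, Function.comp_def]
  rw [h, Polynomial.roots_multiset_prod_X_sub_C]

lemma my_charpoly_psd_roots {n : Type*} [Fintype n] [DecidableEq n] {X : Matrix n n ℂ}
    (hX : X.PosSemidef) :
    X.charpoly.roots = Finset.univ.val.map (fun i => ((hX.1.eigenvalues i : ℝ) : ℂ)) := by
  have h1 : X.charpoly
      = (Matrix.diagonal (RCLike.ofReal ∘ hX.1.eigenvalues : n → ℂ)).charpoly := by
    conv_lhs => rw [hX.1.spectral_theorem]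
    rw [Unitary.conjStarAlgAut_apply, my_charpoly_mul_comm, ← Matrix.mul_assoc,
      Unitary.coe_star_mul_self, Matrix.one_mul]
  rw [h1, my_charpoly_diagonal_roots]
  rfl

lemma my_trace_msqrt_eq {n : Type*} [Fintype n] [DecidableEq n] {X : Matrix n n ℂ}
    (hX : X.PosSemidef) :
    (msqrt X).trace.re = (X.charpoly.roots.map (fun z => Real.sqrt z.re)).sum := by
  rw [msqrt, dif_pos hX]
  rw [Matrix.trace_mul_cycle, Unitary.coe_star_mul_self, Matrix.one_mul, Matrix.trace_diagonal,
    my_charpoly_psd_roots hX, Multiset.map_map, ← Finset.sum_eq_multiset_sum]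
  simp [Function.comp_def]

lemma my_traceNorm_conj {n : Type*} [Fintype n] [DecidableEq n] (M : Matrix n n ℂ) :
    traceNorm M = (msqrt (M * Mᴴ)).trace.re := by
  rw [traceNorm, my_trace_msqrt_eq (Matrix.posSemidef_conjTranspose_mul_self M),
    my_trace_msqrt_eq (Matrix.posSemidef_self_mul_conjTranspose M), my_charpoly_mul_comm]

lemma my_psd_trace_re_nonneg {n : Type*} [Fintype n] [DecidableEq n] {X : Matrix n n ℂ}
    (hX : X.PosSemidef) : 0 ≤ X.trace.re := by
  have h : (0 : ℂ) ≤ X.trace := by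
    refine Finset.sum_nonneg fun i _ => ?_
    have := hX.diag_nonneg (i := i)
    simpa [dotProduct, Matrix.mulVec, Pi.single_apply, Finset.sum_ite_eq] using this
  exact (Complex.le_def.mp h).1

lemma my_trace_mul_psd_nonneg {n : Type*} [Fintype n] [DecidableEq n] {A B : Matrix n n ℂ}
    (hA : A.PosSemidef) (hB : B.PosSemidef) :
    0 ≤ (A * B).trace.re := by
  have h : (A * B).trace = (hB.sqrt * A * hB.sqrt).trace := by
    rw [Matrix.trace_mul_cycle, hB.sqrt_mul_self, Matrix.trace_mul_comm]
  have hpsd : (hB.sqrt * A * hB.sqrt).PosSemidef := by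
    have := hA.mul_mul_conjTranspose_same hB.sqrt
    rwa [hB.posSemidef_sqrt.1.eq] at this
  rw [h]
  exact my_psd_trace_re_nonneg hpsd

lemma my_key_traceNorm {n : Type*} [Fintype n] [DecidableEq n] (ρ P : Matrix n n ℂ)
    (hρ : ρ.PosSemidef) (hP : P.PosSemidef) :
    traceNorm (msqrt ρ * msqrt (P * ρ * P)) = (P * ρ).trace.re := by
  have hσ : (P * ρ * P).PosSemidef := by
    have := hρ.mul_mul_conjTranspose_same P; rwa [hP.1.eq] at this
  have e1 : msqrt ρ = hρ.sqrt := by rw [msqrt, dif_pos hρ]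
  have e2 : msqrt (P * ρ * P) = hσ.sqrt := by rw [msqrt, dif_pos hσ]
  rw [my_traceNorm_conj, e1, e2]
  set R := hρ.sqrt with hR
  set S := hσ.sqrt with hS
  have hB : (R * P * R).PosSemidef := by
    have := hP.mul_mul_conjTranspose_same R
    rwa [hρ.posSemidef_sqrt.1.eq] at this
  have hB2 : (R * P * R) ^ 2 = (R * S) * (R * S)ᴴ := by
    rw [Matrix.conjTranspose_mul, hρ.posSemidef_sqrt.1.eq, hσ.posSemidef_sqrt.1.eq, pow_two]
    have h1 : R * S * (S * R) = R * (S * S) * R := by noncomm_ring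
    have h2 : R * P * R * (R * P * R) = R * (P * (R * R) * P) * R := by noncomm_ring
    rw [h1, h2, hσ.sqrt_mul_self, hρ.sqrt_mul_self]
  have heq := hB.eq_sqrt_of_sq_eq (Matrix.posSemidef_self_mul_conjTranspose (R * S)) hB2
  have e3 : msqrt ((R * S) * (R * S)ᴴ)
      = (Matrix.posSemidef_self_mul_conjTranspose (R * S)).sqrt := by
    rw [msqrt, dif_pos (Matrix.posSemidef_self_mul_conjTranspose (R * S))]
  rw [e3, ← heq, Matrix.trace_mul_cycle, hρ.sqrt_mul_self, Matrix.trace_mul_comm]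

lemma my_scalar_bound {t s a : ℝ} (ht : 0 < t) (ht1 : t ≤ 1) (hs : 0 ≤ s) (hst : s ≤ t)
    (ha : a = Real.sqrt ((1 - t) * (1 - s))) :
    Real.sqrt (1 - (s + a) ^ 2) ≤ (Real.sqrt t)⁻¹ * Real.sqrt (t ^ 2 - s ^ 2) := by
  have h1t : (0:ℝ) ≤ 1 - t := by linarith
  have h1s : (0:ℝ) ≤ 1 - s := by linarith
  have ha0 : 0 ≤ a := ha ▸ Real.sqrt_nonneg _
  have ha2 : a ^ 2 = (1 - t) * (1 - s) := by
    rw [ha, Real.sq_sqrt (mul_nonneg h1t h1s)]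
  have halb : 1 - t ≤ a := by
    rw [ha]
    calc 1 - t = Real.sqrt ((1 - t) ^ 2) := (Real.sqrt_sq h1t).symm
    _ ≤ Real.sqrt ((1 - t) * (1 - s)) := by
        apply Real.sqrt_le_sqrt; rw [pow_two]; exact mul_le_mul_of_nonneg_left (by linarith) h1t
  rw [← Real.sqrt_inv, ← Real.sqrt_mul (by positivity)]
  apply Real.sqrt_le_sqrt
  rw [inv_mul_eq_div, le_div_iff₀ ht]
  nlinarith [mul_nonneg (mul_nonneg hs ht.le) (sub_nonneg.mpr halb),
    mul_nonneg (mul_nonneg hs h1t) (sub_nonneg.mpr hst)]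

theorem stmt7 {n : Type*} [Fintype n] [DecidableEq n] (ρ P : Matrix n n ℂ)
    (hρ : Subnormalized ρ) (hP : P.PosSemidef) (hPI : loewnerLE P 1) :
    pdist ρ (P * ρ * P) ≤
      (Real.sqrt ρ.trace.re)⁻¹ *
        Real.sqrt (ρ.trace.re ^ 2 - ((P * P * ρ).trace.re) ^ 2) := by
  obtain ⟨hρpsd, ht0, ht1⟩ := hρ
  have h1P : (1 - P).PosSemidef := hPI
  set t := ρ.trace.re with htdef
  set s := (P * P * ρ).trace.re with hsdef
  set Q := hP.sqrt with hQ
  -- P * P is PSD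
  have hPP : (P * P).PosSemidef := by
    have := Matrix.posSemidef_conjTranspose_mul_self P
    rwa [hP.1.eq] at this
  -- P - P * P is PSD
  have hPmPP : (P - P * P).PosSemidef := by
    have hpsd : (Q * (1 - P) * Q).PosSemidef := by
      have := h1P.mul_mul_conjTranspose_same Q
      rwa [hP.posSemidef_sqrt.1.eq] at this
    have hQPQ : Q * P * Q = P * P := by
      conv_lhs => rw [← hP.sqrt_mul_self]
      rw [show Q * (Q * Q) * Q = (Q * Q) * (Q * Q) by noncomm_ring, hP.sqrt_mul_self]
    have : Q * (1 - P) * Q = P - P * P := by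
      rw [Matrix.mul_sub, Matrix.mul_one, Matrix.sub_mul, hP.sqrt_mul_self, hQPQ]
    rwa [this] at hpsd
  -- 1 - P * P is PSD
  have h1PP : ((1 : Matrix n n ℂ) - P * P).PosSemidef := by
    have := h1P.add hPmPP
    rwa [show (1 - P) + (P - P * P) = 1 - P * P by abel] at this
  -- basic inequalities on s, t and u := (P * ρ).trace.re
  have hs0 : 0 ≤ s := my_trace_mul_psd_nonneg hPP hρpsd
  have hst : s ≤ t := by
    have := my_trace_mul_psd_nonneg h1PP hρpsd
    rw [Matrix.sub_mul, Matrix.one_mul, Matrix.trace_sub, Complex.sub_re] at this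
    rw [htdef, hsdef]; linarith
  have hus : s ≤ (P * ρ).trace.re := by
    have := my_trace_mul_psd_nonneg hPmPP hρpsd
    rw [Matrix.sub_mul, Matrix.trace_sub, Complex.sub_re] at this
    rw [hsdef]; linarith
  -- the trace of P * ρ * P
  have hstrace : (P * ρ * P).trace.re = s := by
    rw [hsdef, Matrix.trace_mul_cycle]
  -- lower bound on the fidelity
  set a := Real.sqrt ((1 - t) * (1 - s)) with hadef
  have hfid : s + a ≤ fid ρ (P * ρ * P) := by
    rw [fid, my_key_traceNorm ρ P hρpsd hP, hstrace]
    exact add_le_add hus le_rfl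
  have hg0 : 0 ≤ s + a := add_nonneg hs0 (Real.sqrt_nonneg _)
  -- conclude
  rw [pdist]
  calc Real.sqrt (1 - fid ρ (P * ρ * P) ^ 2)
      ≤ Real.sqrt (1 - (s + a) ^ 2) := by
        apply Real.sqrt_le_sqrt
        have := pow_le_pow_left₀ hg0 hfid 2
        linarith
    _ ≤ (Real.sqrt t)⁻¹ * Real.sqrt (t ^ 2 - s ^ 2) :=
        my_scalar_bound ht0 ht1 hs0 hst hadef
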